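/- For all positive integers m and n, A(m+n-1, m-1) = sum over d dividing m+n of (sum over c dividing (m+n)/d of mu(c) * A_{cd}(m+n-1, m-1)), where mu is the Möbius function and A_d denotes the generalized Eulerian numbers. -/

import Mathlib

/-- Eulerian numbers. -/
def eulerian : ℕ → ℕ → ℕ
  | 0, 0 => 1
  | 0, _ + 1 => 0
  | n + 1, 0 => eulerian n 0
  | n + 1, k + 1 => (k + 2) * eulerian n (k + 1) + (n - k) * eulerian n k

/-- Generalized Eulerian numbers `A_d(k, l)`. -/
def genEulerian (d : ℕ) : ℕ → ℤ → ℤ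
  | k, l =>
    if _h : k < d then
      (if 0 ≤ l ∧ l ≤ (k : ℤ) ∧ Int.gcd (l + 1) d = 1 then 1 else 0)
    else if _h0 : d = 0 then 0
    else (l + 1) * genEulerian d (k - d) l + ((k : ℤ) - l) * genEulerian d (k - d) (l - d)
  termination_by k _ => k
  decreasing_by all_goals omega

lemma eulerian_eq_zero_of_lt : ∀ k l : ℕ, k < l → eulerian k l = 0 := by
  intro k
  induction k with
  | zero => intro l h; cases l with
    | zero => omega
    | succ l => rw [eulerian]
  | succ n ih =>
    intro l h
    cases l with
    | zero => omega
    | succ k =>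
      rw [eulerian, ih (k+1) (by omega), ih k (by omega)]
      ring

lemma genEulerian_one_eq_zero : ∀ (k : ℕ) (l : ℤ), l < 0 ∨ (k : ℤ) < l →
    genEulerian 1 k l = 0 := by
  intro k
  induction k with
  | zero =>
    intro l h
    rw [genEulerian]
    simp only [Nat.lt_one_iff, reduceDIte, Nat.cast_zero]
    rw [if_neg (by omega)]
  | succ n ih =>
    intro l h
    rw [genEulerian]
    rw [dif_neg (by omega), dif_neg (by omega)]
    have h1 : genEulerian 1 (n + 1 - 1) l = 0 := by
      rw [show n + 1 - 1 = n from rfl]; exact ih l (by push_cast at h ⊢; omega)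
    have h2 : genEulerian 1 (n + 1 - 1) (l - 1) = 0 := by
      rw [show n + 1 - 1 = n from rfl]; exact ih (l - 1) (by push_cast at h ⊢; omega)
    rw [Nat.cast_one]
    rw [h1, h2]
    ring

lemma genEulerian_one_eq : ∀ (k l : ℕ), l ≤ k →
    genEulerian 1 k (l : ℤ) = (eulerian k l : ℤ) := by
  intro k
  induction k with
  | zero =>
    intro l h
    interval_cases l
    rw [genEulerian]
    norm_num
    rfl
  | succ n ih =>
    intro l h
    rw [genEulerian, dif_neg (by omega), dif_neg (by omega)]
    rw [show n + 1 - 1 = n from rfl, Nat.cast_one]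
    cases l with
    | zero =>
      rw [show ((0:ℕ):ℤ) = (0:ℤ) from rfl]
      rw [genEulerian_one_eq_zero n ((0:ℤ) - 1) (by norm_num)]
      have := ih 0 (Nat.zero_le n)
      rw [show ((0:ℕ):ℤ) = (0:ℤ) from rfl] at this
      rw [this, show eulerian (n+1) 0 = eulerian n 0 from rfl]
      ring
    | succ j =>
      rw [show eulerian (n+1) (j+1) = (j + 2) * eulerian n (j + 1) + (n - j) * eulerian n j
        from rfl]
      have hjn : j ≤ n := by omega
      have h2 : genEulerian 1 n ((((j+1):ℕ):ℤ) - 1) = (eulerian n j : ℤ) := by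
        rw [show ((((j+1):ℕ):ℤ) - 1) = ((j:ℕ) : ℤ) by push_cast; ring]
        exact ih j hjn
      rw [h2]
      by_cases hcase : j + 1 ≤ n
      · rw [ih (j+1) hcase]
        have : ((n - j : ℕ) : ℤ) = (n : ℤ) - j := by omega
        push_cast [this]
        ring
      · have hj : j = n := by omega
        subst hj
        rw [genEulerian_one_eq_zero j (((j+1:ℕ)):ℤ) (by right; push_cast; omega)]
        rw [eulerian_eq_zero_of_lt j (j+1) (by omega)]
        rw [Nat.sub_self]
        push_cast
        ring

open ArithmeticFunction in
lemma sum_moebius_divisors (e : ℕ) :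
    (∑ c ∈ e.divisors, (moebius c : ℤ)) = if e = 1 then 1 else 0 := by
  have h1 : (moebius * ((zeta : ArithmeticFunction ℕ) : ArithmeticFunction ℤ)) e = (1 : ArithmeticFunction ℤ) e := by
    rw [moebius_mul_coe_zeta]
  rw [coe_mul_zeta_apply] at h1
  rw [h1, one_apply]

open ArithmeticFunction in
lemma divisor_double_sum (N : ℕ) (hN0 : N ≠ 0) (A : ℕ → ℤ) :
    ∑ d ∈ N.divisors, ∑ c ∈ (N / d).divisors, (moebius c : ℤ) * A (c * d)
      = ∑ e ∈ N.divisors, ∑ c ∈ e.divisors, (moebius c : ℤ) * A e := by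
  rw [Finset.sum_sigma', Finset.sum_sigma']
  refine Finset.sum_nbij' (fun x => ⟨x.2 * x.1, x.2⟩) (fun x => ⟨x.1 / x.2, x.2⟩)
    ?_ ?_ ?_ ?_ ?_
  · rintro ⟨d, c⟩ hx
    simp only [Finset.mem_sigma, Nat.mem_divisors] at hx ⊢
    obtain ⟨⟨hd, -⟩, hc, hnd0⟩ := hx
    have hd0 : d ≠ 0 := by rintro rfl; exact hnd0 (Nat.div_zero N)
    have hc0 : c ≠ 0 := by rintro rfl; exact hnd0 (Nat.eq_zero_of_zero_dvd hc)
    have hcd : c * d ∣ N := by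
      have := mul_dvd_mul_right hc d
      rwa [Nat.div_mul_cancel hd] at this
    exact ⟨⟨hcd, hN0⟩, dvd_mul_right c d, by positivity⟩
  · rintro ⟨e, c⟩ hx
    simp only [Finset.mem_sigma, Nat.mem_divisors] at hx ⊢
    obtain ⟨⟨he, -⟩, hc, he0⟩ := hx
    obtain ⟨a, ha⟩ := he
    obtain ⟨b, hb⟩ := hc
    have hc0 : c ≠ 0 := by rintro rfl; exact he0 (by simp [hb])
    have hb0 : b ≠ 0 := by rintro rfl; exact he0 (by simp [hb])
    have ha0 : a ≠ 0 := by rintro rfl; exact hN0 (by simp [ha])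
    have hec : e / c = b := by rw [hb, Nat.mul_div_cancel_left b (Nat.pos_of_ne_zero hc0)]
    have hNb : N / b = c * a := by
      rw [ha, hb, show c * b * a = b * (c * a) by ring,
        Nat.mul_div_cancel_left _ (Nat.pos_of_ne_zero hb0)]
    refine ⟨⟨⟨c * a, by rw [hec, ha, hb]; ring⟩, hN0⟩, ?_, ?_⟩
    · rw [hec, hNb]; exact dvd_mul_right c a
    · rw [hec, hNb]; positivity
  · rintro ⟨d, c⟩ hx
    simp only [Finset.mem_sigma, Nat.mem_divisors] at hx
    obtain ⟨⟨hd, -⟩, hc, hnd0⟩ := hx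
    have hc0 : c ≠ 0 := by rintro rfl; exact hnd0 (Nat.eq_zero_of_zero_dvd hc)
    simp [Nat.mul_div_cancel_left _ (Nat.pos_of_ne_zero hc0)]
  · rintro ⟨e, c⟩ hx
    simp only [Finset.mem_sigma, Nat.mem_divisors] at hx
    obtain ⟨⟨he, -⟩, hc, he0⟩ := hx
    have hce : c * (e / c) = e := Nat.mul_div_cancel' hc
    simp [hce]
  · rintro ⟨d, c⟩ hx
    rfl

open ArithmeticFunction in
/-- Möbius-inversion decomposition of the Eulerian number:
`A(m+n-1, m-1) = ∑_{d ∣ m+n} ∑_{c ∣ (m+n)/d} μ(c) A_{cd}(m+n-1, m-1)`. -/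
theorem eulerian_moebius_decomposition (m n : ℕ) (hm : 0 < m) (hn : 0 < n) :
    (eulerian (m + n - 1) (m - 1) : ℤ) =
      ∑ d ∈ (m + n).divisors, ∑ c ∈ ((m + n) / d).divisors,
        (moebius c : ℤ) * genEulerian (c * d) (m + n - 1) ((m : ℤ) - 1) := by
  have hN0 : m + n ≠ 0 := by omega
  rw [divisor_double_sum (m + n) hN0 (fun e => genEulerian e (m + n - 1) ((m : ℤ) - 1))]
  have inner : ∀ e ∈ (m + n).divisors, ∑ c ∈ e.divisors,
      (moebius c : ℤ) * genEulerian e (m + n - 1) ((m : ℤ) - 1)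
      = if e = 1 then genEulerian 1 (m + n - 1) ((m : ℤ) - 1) else 0 := by
    intro e _
    rw [← Finset.sum_mul, sum_moebius_divisors]
    split_ifs with h
    · rw [h, one_mul]
    · rw [zero_mul]
  rw [Finset.sum_congr rfl inner, Finset.sum_ite_eq' (m + n).divisors 1,
    if_pos (Nat.one_mem_divisors.mpr hN0)]
  have hm1 : ((m : ℤ) - 1) = ((m - 1 : ℕ) : ℤ) := by omega
  rw [hm1, genEulerian_one_eq (m + n - 1) (m - 1) (by omega)]
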